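/- Let H ∈ ℂ^{N×L} (with N ≤ L) have full row rank N, and write H^H = F·C where F ∈ ℂ^{L×N} has orthonormal columns (F^H F = I_N) and C ∈ ℂ^{N×N} is invertible. Suppose U ∈ ℂ^{N×d} and V ∈ ℂ^{L×m} satisfy U^H F^H V = 0. Then (C^{-1}U)^H H V = 0, and moreover rank(C^{-1}U) = rank(U); in particular if U has full column rank d then C^{-1}U has full column rank d. (Hence an interference-alignment solution computed from any orthonormal basis F of the row space of H yields, after the change of receive filter U ↦ C^{-1}U, an alignment solution for the true channel H.) -/

import Mathlib

open Matrix

/-- **Lemma 1 (core).** If `Hᴴ = F * C` with `F` truncated unitary and `C` invertible,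
and `Uᴴ Fᴴ V = 0`, then `(C⁻¹ U)ᴴ H V = 0` and `rank (C⁻¹ U) = rank U`;
in particular full column rank is preserved. -/
theorem grassmannian_feedback_yields_alignment
    (N L d m : ℕ) (hNL : N ≤ L)
    (H : Matrix (Fin N) (Fin L) ℂ) (hHrank : H.rank = N)
    (F : Matrix (Fin L) (Fin N) ℂ) (C : Matrix (Fin N) (Fin N) ℂ)
    (hFC : Hᴴ = F * C) (hF : Fᴴ * F = 1) (hC : IsUnit C.det)
    (U : Matrix (Fin N) (Fin d) ℂ) (V : Matrix (Fin L) (Fin m) ℂ)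
    (hIA : Uᴴ * Fᴴ * V = 0) :
    (C⁻¹ * U)ᴴ * H * V = 0 ∧ (C⁻¹ * U).rank = U.rank ∧
      (U.rank = d → (C⁻¹ * U).rank = d) := by
  have hH : H = Cᴴ * Fᴴ := by
    have := congrArg conjTranspose hFC
    simpa [conjTranspose_mul] using this
  have hinv : (C⁻¹)ᴴ * Cᴴ = 1 := by
    rw [← conjTranspose_mul, Matrix.mul_nonsing_inv _ hC, conjTranspose_one]
  have hrank : (C⁻¹ * U).rank = U.rank :=
    rank_mul_eq_right_of_isUnit_det _ _ (by
      rw [Matrix.det_nonsing_inv]; exact (isUnit_ringInverse.mpr hC))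
  refine ⟨?_, hrank, fun h => hrank.trans h⟩
  calc (C⁻¹ * U)ᴴ * H * V = Uᴴ * ((C⁻¹)ᴴ * Cᴴ) * (Fᴴ * V) := by
        rw [hH, conjTranspose_mul]; simp only [Matrix.mul_assoc]
    _ = Uᴴ * Fᴴ * V := by rw [hinv, Matrix.mul_one, Matrix.mul_assoc]
    _ = 0 := hIA
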